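/- Let 0 → L →u M →p N → 0 be a short exact sequence of ℤ-indexed cochain complexes of abelian groups (exact in every degree), let g : Ω ⟶ M be a morphism of cochain complexes, and let k be an integer. Let φ_k : L ⊕ σ_{≥k}Ω ⟶ M be the morphism (l,x) ↦ u(l) + g(x) (restricting g along the inclusion σ_{≥k}Ω ⊆ Ω), and let ψ_k : σ_{≥k}Ω ⟶ N be the restriction of p ∘ g. Then for every integer n the chain map Cone(φ_k) → Cone(ψ_k) given degreewise by (l, x, m) ↦ (x, p(m)) induces an isomorphism H^n(Cone(φ_k)) ≅ H^n(Cone(ψ_k)). -/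

import Mathlib

/-! Basic framework: ℤ-indexed cochain complexes of abelian groups, chain maps,
cohomology, mapping cones (with the sign convention
`d(a,b) = (d a, (-1)^(n+1) f a + d b)`), brutal truncations. -/

universe u

structure Cplx : Type (u + 1) where
  X : ℤ → Type u
  inst : ∀ n, AddCommGroup (X n)
  d : ∀ n, X n →+ X (n + 1)
  dsq : ∀ (n : ℤ) (x : X n), d (n + 1) (d n x) = 0

attribute [instance] Cplx.inst

namespace Cplx

/-- Transport along an equality of degrees. -/
def tr (C : Cplx) {m n : ℤ} (h : m = n) : C.X m →+ C.X n where
  toFun x := _root_.cast (congrArg C.X h) x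
  map_zero' := by subst h; rfl
  map_add' := by subst h; intros; rfl

lemma tr_tr (C : Cplx) {m n p : ℤ} (h1 : m = n) (h2 : n = p) (x : C.X m) :
    C.tr h2 (C.tr h1 x) = C.tr (h1.trans h2) x := by subst h1; subst h2; rfl

lemma d_tr (C : Cplx) {m n : ℤ} (h : m = n) (x : C.X m) :
    C.d n (C.tr h x) = C.tr (congrArg (· + 1) h) (C.d m x) := by subst h; rfl

/-- Morphisms of cochain complexes. -/
structure Hom (A B : Cplx) where
  f : ∀ n, A.X n →+ B.X n
  comm : ∀ (n : ℤ) (x : A.X n), f (n + 1) (A.d n x) = B.d n (f n x)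

def Hom.comp {A B C : Cplx} (g : Hom B C) (h : Hom A B) : Hom A C where
  f n := (g.f n).comp (h.f n)
  comm n x := by simp only [AddMonoidHom.comp_apply, h.comm, g.comm]

lemma Hom.f_tr {A B : Cplx} (g : Hom A B) {m n : ℤ} (h : m = n) (x : A.X m) :
    g.f n (A.tr h x) = B.tr h (g.f m x) := by subst h; rfl

/-- The subgroup of cocycles in degree `n`. -/
def Zc (C : Cplx) (n : ℤ) : AddSubgroup (C.X n) := (C.d n).ker

lemma mem_Zc {C : Cplx} {n : ℤ} {x : C.X n} : x ∈ C.Zc n ↔ C.d n x = 0 :=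
  AddMonoidHom.mem_ker

/-- The subgroup of coboundaries in degree `n`. -/
def Bd (C : Cplx) (n : ℤ) : AddSubgroup (C.X n) :=
  AddSubgroup.map (C.tr (show n - 1 + 1 = n by omega)) (C.d (n - 1)).range

/-- The `n`-th cohomology group. -/
def H (C : Cplx) (n : ℤ) : Type u :=
  ↥(C.Zc n) ⧸ (C.Bd n).addSubgroupOf (C.Zc n)

instance (C : Cplx) (n : ℤ) : AddCommGroup (C.H n) :=
  inferInstanceAs (AddCommGroup (↥(C.Zc n) ⧸ (C.Bd n).addSubgroupOf (C.Zc n)))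

/-- The cohomology class of a cocycle. -/
def clsOf (C : Cplx) (n : ℤ) (x : C.X n) (hx : x ∈ C.Zc n) : C.H n :=
  QuotientAddGroup.mk (⟨x, hx⟩ : C.Zc n)

/-- The map induced on cocycles by a chain map. -/
def zMap {A B : Cplx} (g : Hom A B) (n : ℤ) : ↥(A.Zc n) →+ ↥(B.Zc n) :=
  AddMonoidHom.codRestrict ((g.f n).comp (A.Zc n).subtype) (B.Zc n) (fun x => by
    have hx : A.d n ((A.Zc n).subtype x) = 0 := mem_Zc.mp x.2
    exact mem_Zc.mpr (by rw [AddMonoidHom.comp_apply, ← g.comm, hx, map_zero]))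

/-- The map induced on cohomology by a chain map. -/
def Hmap {A B : Cplx} (g : Hom A B) (n : ℤ) : A.H n →+ B.H n :=
  QuotientAddGroup.map _ _ (zMap g n) (by
    intro x hx
    rw [AddSubgroup.mem_comap, AddSubgroup.mem_addSubgroupOf]
    rw [AddSubgroup.mem_addSubgroupOf] at hx
    obtain ⟨y, hy, hxy⟩ := hx
    obtain ⟨z, rfl⟩ := hy
    have hcoe : ((zMap g n x : ↥(B.Zc n)) : B.X n) = g.f n (x : A.X n) := rfl
    rw [hcoe, ← hxy, Hom.f_tr]
    exact AddSubgroup.mem_map.mpr ⟨B.d (n - 1) (g.f (n - 1) z),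
      AddMonoidHom.mem_range.mpr ⟨g.f (n - 1) z, rfl⟩, by rw [g.comm]⟩)

/-- Direct sum of two cochain complexes. -/
def dsum (A B : Cplx) : Cplx where
  X n := A.X n × B.X n
  inst n := inferInstance
  d n := (A.d n).prodMap (B.d n)
  dsq n x := by
    show (A.d (n + 1) (A.d n x.1), B.d (n + 1) (B.d n x.2)) = 0
    rw [A.dsq, B.dsq]; rfl

/-- The morphism `L ⊕ F ⟶ M`, `(l, x) ↦ u l + g x`. -/
def sumHom {L F M : Cplx} (u : Hom L M) (g : Hom F M) : Hom (dsum L F) M where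
  f n := (u.f n).coprod (g.f n)
  comm n x := by
    show u.f (n + 1) (L.d n x.1) + g.f (n + 1) (F.d n x.2) =
      M.d n (u.f n x.1 + g.f n x.2)
    rw [map_add, u.comm, g.comm]

/-- The mapping cone of a chain map, with differential
`d (a, b) = (d a, (-1)^(n+1) • g a + d b)`. -/
def cone {A B : Cplx} (g : Hom A B) : Cplx where
  X n := A.X n × B.X (n - 1)
  inst n := inferInstance
  d n := AddMonoidHom.mk' (fun p =>
      (A.d n p.1,
        B.tr (show n = n + 1 - 1 by omega) ((Int.negOnePow (n + 1) : ℤ) • g.f n p.1) +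
          B.tr (show n - 1 + 1 = n + 1 - 1 by omega) (B.d (n - 1) p.2)))
    (fun p q => by
      refine Prod.ext (map_add _ _ _) ?_
      show B.tr _ ((Int.negOnePow (n + 1) : ℤ) • g.f n (p.1 + q.1)) +
          B.tr _ (B.d (n - 1) (p.2 + q.2)) = _
      rw [map_add (g.f n), smul_add, map_add, map_add (B.d (n - 1)), map_add]
      simp only [Prod.snd_add]
      abel)
  dsq n p := by
    refine Prod.ext (A.dsq n p.1) ?_
    show B.tr (show n + 1 = n + 1 + 1 - 1 by omega)
          ((Int.negOnePow (n + 1 + 1) : ℤ) • g.f (n + 1) (A.d n p.1)) +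
        B.tr (show n + 1 - 1 + 1 = n + 1 + 1 - 1 by omega)
          (B.d (n + 1 - 1)
            (B.tr (show n = n + 1 - 1 by omega) ((Int.negOnePow (n + 1) : ℤ) • g.f n p.1) +
              B.tr (show n - 1 + 1 = n + 1 - 1 by omega) (B.d (n - 1) p.2))) = 0
    rw [map_add (B.d (n + 1 - 1)), d_tr, d_tr, map_add (B.tr _), tr_tr, tr_tr,
      B.dsq (n - 1) p.2, map_zero, add_zero, g.comm n p.1,
      map_zsmul (B.d n)]
    show B.tr (show n + 1 = n + 1 + 1 - 1 by omega)
        ((Int.negOnePow (n + 1 + 1) : ℤ) • B.d n (g.f n p.1)) +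
      B.tr (show n + 1 = n + 1 + 1 - 1 by omega)
        ((Int.negOnePow (n + 1) : ℤ) • B.d n (g.f n p.1)) = 0
    rw [← map_add, ← add_smul]
    have : ((Int.negOnePow (n + 1 + 1) : ℤ) + (Int.negOnePow (n + 1) : ℤ)) = 0 := by
      rw [Int.negOnePow_succ (n + 1), Units.val_neg, neg_add_cancel]
    rw [this, zero_smul, map_zero]

/-- A subcomplex determined by a `d`-stable family of subgroups. -/
def subCplx (C : Cplx) (S : ∀ n, AddSubgroup (C.X n))
    (hS : ∀ (n : ℤ) (x : C.X n), x ∈ S n → C.d n x ∈ S (n + 1)) : Cplx where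
  X n := S n
  inst n := inferInstance
  d n := AddMonoidHom.codRestrict ((C.d n).comp (S n).subtype) (S (n + 1))
    (fun x => hS n x.1 x.2)
  dsq n x := Subtype.ext (C.dsq n x.1)

/-- The inclusion of a subcomplex. -/
def subIncl (C : Cplx) (S : ∀ n, AddSubgroup (C.X n))
    (hS : ∀ (n : ℤ) (x : C.X n), x ∈ S n → C.d n x ∈ S (n + 1)) :
    Hom (subCplx C S hS) C where
  f n := (S n).subtype
  comm _ _ := rfl

/-- The quotient complex by a `d`-stable family of subgroups. -/
def quotCplx (C : Cplx) (S : ∀ n, AddSubgroup (C.X n))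
    (hS : ∀ (n : ℤ) (x : C.X n), x ∈ S n → C.d n x ∈ S (n + 1)) : Cplx where
  X n := C.X n ⧸ S n
  inst n := inferInstance
  d n := QuotientAddGroup.map (S n) (S (n + 1)) (C.d n) (fun x hx => by
    rw [AddSubgroup.mem_comap]; exact hS n x hx)
  dsq n x := by
    induction x using QuotientAddGroup.induction_on with
    | H z =>
      show QuotientAddGroup.map _ _ _ _ (QuotientAddGroup.map _ _ _ _ ((z : C.X n ⧸ S n))) = 0
      rw [QuotientAddGroup.map_mk, QuotientAddGroup.map_mk, C.dsq]
      rfl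

/-- The projection onto a quotient complex. -/
def quotProj (C : Cplx) (S : ∀ n, AddSubgroup (C.X n))
    (hS : ∀ (n : ℤ) (x : C.X n), x ∈ S n → C.d n x ∈ S (n + 1)) :
    Hom C (quotCplx C S hS) where
  f n := QuotientAddGroup.mk' (S n)
  comm _ _ := rfl

/-- The family of subgroups defining the brutal truncation `σ_{≥k}`. -/
def geSub (F : Cplx) (k n : ℤ) : AddSubgroup (F.X n) := if k ≤ n then ⊤ else ⊥

lemma geSub_stable (F : Cplx) (k : ℤ) :
    ∀ (n : ℤ) (x : F.X n), x ∈ geSub F k n → F.d n x ∈ geSub F k (n + 1) := by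
  intro n x hx
  by_cases h : k ≤ n + 1
  · simp [geSub, h]
  · have h' : ¬ k ≤ n := by omega
    simp only [geSub, h', if_neg, if_false, AddSubgroup.mem_bot] at hx
    simp [geSub, h, hx]

/-- The brutal truncation `σ_{≥k} F` (a subcomplex of `F`). -/
def truncGE (F : Cplx) (k : ℤ) : Cplx := subCplx F (geSub F k) (geSub_stable F k)

/-- The inclusion `σ_{≥k} F ⟶ F`. -/
def truncGEincl (F : Cplx) (k : ℤ) : Hom (truncGE F k) F :=
  subIncl F (geSub F k) (geSub_stable F k)

/-- The brutal truncation `σ_{<k} F` (a quotient complex of `F`). -/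
def truncLT (F : Cplx) (k : ℤ) : Cplx := quotCplx F (geSub F k) (geSub_stable F k)

/-- The projection `F ⟶ σ_{<k} F`. -/
def truncLTproj (F : Cplx) (k : ℤ) : Hom F (truncLT F k) :=
  quotProj F (geSub F k) (geSub_stable F k)

end Cplx

namespace Cplx

lemma tr_eq_self (C : Cplx) {n : ℤ} (h : n = n) (x : C.X n) : C.tr h x = x := rfl

lemma tr_eq_iff (C : Cplx) {m n : ℤ} (h : m = n) {x : C.X m} {y : C.X n} :
    C.tr h x = y ↔ x = C.tr h.symm y := by subst h; exact Iff.rfl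

lemma dsum_tr (A B : Cplx) {m n : ℤ} (h : m = n) (z : (dsum A B).X m) :
    (dsum A B).tr h z = (A.tr h z.1, B.tr h z.2) := by subst h; rfl

lemma cone_tr {A B : Cplx} (g : Hom A B) {m n : ℤ} (h : m = n) (h' : m - 1 = n - 1)
    (z : (cone g).X m) :
    (cone g).tr h z = (A.tr h z.1, B.tr h' z.2) := by subst h; rfl

lemma cone_d {A B : Cplx} (g : Hom A B) (n : ℤ) (z : (cone g).X n) :
    (cone g).d n z = (A.d n z.1,
      B.tr (show n = n + 1 - 1 by omega) ((Int.negOnePow (n + 1) : ℤ) • g.f n z.1) +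
        B.tr (show n - 1 + 1 = n + 1 - 1 by omega) (B.d (n - 1) z.2)) := rfl

lemma mem_Bd {C : Cplx} {n : ℤ} {x : C.X n} :
    x ∈ C.Bd n ↔ ∃ y : C.X (n - 1), C.tr (show n - 1 + 1 = n by omega) (C.d (n - 1) y) = x := by
  constructor
  · rintro ⟨-, ⟨y, rfl⟩, rfl⟩; exact ⟨y, rfl⟩
  · rintro ⟨y, rfl⟩; exact ⟨C.d (n-1) y, ⟨y, rfl⟩, rfl⟩

lemma eps_smul_eps_smul {G : Type u} [AddCommGroup G] (a : ℤ) (x : G) :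
    (Int.negOnePow a : ℤ) • (Int.negOnePow a : ℤ) • x = x := by
  rw [smul_smul, ← Units.val_mul, Int.units_mul_self, Units.val_one, one_smul]

end Cplx

open Cplx in
theorem key (L M N F : Cplx) (u : Cplx.Hom L M) (p : Cplx.Hom M N)
    (hinj : ∀ n, Function.Injective (u.f n))
    (hexact : ∀ n, (p.f n).ker = (u.f n).range)
    (hsurj : ∀ n, Function.Surjective (p.f n))
    (g : Cplx.Hom F M) :
    ∃ θ : Cplx.Hom (cone (sumHom u g)) (cone (p.comp g)),
      (∀ (n : ℤ) (x : (cone (sumHom u g)).X n), θ.f n x = (x.1.2, p.f (n - 1) x.2)) ∧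
      (∀ n, Function.Bijective (Hmap θ n)) := by
  have hpu : ∀ (n : ℤ) (l : L.X n), p.f n (u.f n l) = 0 := by
    intro n l
    have : u.f n l ∈ (p.f n).ker := by rw [hexact n]; exact ⟨l, rfl⟩
    exact this
  refine ⟨⟨fun n => AddMonoidHom.mk' (fun z => (z.1.2, p.f (n - 1) z.2))
      (fun a b => Prod.ext rfl (map_add _ _ _)), ?_⟩, fun n x => rfl, ?_⟩
  · intro n z
    refine Prod.ext rfl ?_
    show p.f (n + 1 - 1)
        (M.tr (show n = n + 1 - 1 by omega)
            ((Int.negOnePow (n + 1) : ℤ) • (u.f n z.1.1 + g.f n z.1.2)) +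
          M.tr (show n - 1 + 1 = n + 1 - 1 by omega) (M.d (n - 1) z.2)) =
      N.tr (show n = n + 1 - 1 by omega) ((Int.negOnePow (n + 1) : ℤ) • p.f n (g.f n z.1.2)) +
        N.tr (show n - 1 + 1 = n + 1 - 1 by omega) (N.d (n - 1) (p.f (n - 1) z.2))
    rw [map_add, Hom.f_tr, Hom.f_tr, map_zsmul, map_add, hpu, zero_add, p.comm]
  · intro n
    constructor
    · rw [injective_iff_map_eq_zero]
      intro a
      refine QuotientAddGroup.induction_on a ?_
      rintro ⟨⟨⟨l, x⟩, m⟩, hc⟩ ha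
      have hε : (Int.negOnePow (n - 1 + 1) : ℤ) = -(Int.negOnePow (n + 1) : ℤ) := by
        rw [show n - 1 + 1 = n from by omega, Int.negOnePow_succ, Units.val_neg, neg_neg]
      have hb : ((x, p.f (n - 1) m)) ∈ (cone (p.comp g)).Bd n := by
        have h0 := (QuotientAddGroup.eq_zero_iff _).mp ha
        rwa [AddSubgroup.mem_addSubgroupOf] at h0
      replace hb := mem_Bd.mp hb
      obtain ⟨w, hw⟩ := hb
      erw [cone_d, cone_tr _ _ (show n - 1 + 1 - 1 = n - 1 by omega), Prod.ext_iff] at hw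
      obtain ⟨hw1, hw2⟩ := hw
      rw [map_add, tr_tr, tr_tr, tr_eq_self] at hw2
      have hw1' : F.tr (show n - 1 + 1 = n by omega) (F.d (n - 1) w.1) = x := hw1
      have hw2' : (Int.negOnePow (n - 1 + 1) : ℤ) • p.f (n - 1) (g.f (n - 1) w.1) +
          N.tr (show n - 1 - 1 + 1 = n - 1 by omega) (N.d (n - 1 - 1) w.2) =
            p.f (n - 1) m := hw2
      have hcd : (cone (sumHom u g)).d n ((l, x), m) = 0 := hc
      erw [cone_d, Prod.ext_iff] at hcd
      obtain ⟨hc1, hc2⟩ := hcd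
      have hdl : L.d n l = 0 := congrArg Prod.fst hc1
      erw [Prod.snd_zero] at hc2
      have hc2' := congrArg (M.tr (show n + 1 - 1 = n by omega)) hc2
      rw [map_add, tr_tr, tr_tr, tr_eq_self, map_zero] at hc2'
      have hc2'' : (Int.negOnePow (n + 1) : ℤ) • (u.f n l + g.f n x) +
          M.tr (show n - 1 + 1 = n by omega) (M.d (n - 1) m) = 0 := hc2'
      have hdm : M.tr (show n - 1 + 1 = n by omega) (M.d (n - 1) m) =
          -((Int.negOnePow (n + 1) : ℤ) • (u.f n l + g.f n x)) :=
        eq_neg_of_add_eq_zero_left (by rw [add_comm]; exact hc2'')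
      obtain ⟨μ, hμ⟩ := hsurj (n - 1 - 1) w.2
      set m' : M.X (n - 1) := m - (Int.negOnePow (n - 1 + 1) : ℤ) • g.f (n - 1) w.1 -
        M.tr (show n - 1 - 1 + 1 = n - 1 by omega) (M.d (n - 1 - 1) μ) with hm'
      have hker : m' ∈ (p.f (n - 1)).ker := by
        rw [AddMonoidHom.mem_ker, hm', map_sub, map_sub, map_zsmul, Hom.f_tr, p.comm, hμ]
        rw [sub_sub, hw2', sub_self]
      rw [hexact (n - 1)] at hker
      obtain ⟨w0, hw0⟩ := hker
      refine (QuotientAddGroup.eq_zero_iff _).mpr (AddSubgroup.mem_addSubgroupOf.mpr ?_)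
      rw [mem_Bd]
      refine ⟨(((Int.negOnePow (n - 1 + 1) : ℤ) • w0, w.1), μ), ?_⟩
      erw [cone_d, cone_tr _ _ (show n - 1 + 1 - 1 = n - 1 by omega)]
      refine Prod.ext ?_ ?_
      · rw [dsum_tr]
        refine Prod.ext ?_ ?_
        · show L.tr (show n - 1 + 1 = n by omega)
              (L.d (n - 1) ((Int.negOnePow (n - 1 + 1) : ℤ) • w0)) = l
          apply hinj n
          rw [Hom.f_tr, u.comm, map_zsmul (u.f (n - 1)), hw0, map_zsmul, map_zsmul, hm']
          simp only [map_sub, map_zsmul, d_tr, M.dsq, map_zero, sub_zero, tr_tr]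
          rw [hdm, ← g.comm, ← Hom.f_tr, hw1', hε]
          simp only [neg_smul, smul_neg, neg_neg, smul_sub, smul_add, eps_smul_eps_smul]
          abel
        · show F.tr (show n - 1 + 1 = n by omega) (F.d (n - 1) w.1) = x
          exact hw1'
      · show M.tr (show n - 1 + 1 - 1 = n - 1 by omega)
            (M.tr (show n - 1 = n - 1 + 1 - 1 by omega)
              ((Int.negOnePow (n - 1 + 1) : ℤ) •
                (u.f (n - 1) ((Int.negOnePow (n - 1 + 1) : ℤ) • w0) + g.f (n - 1) w.1)) +
              M.tr (show n - 1 - 1 + 1 = n - 1 + 1 - 1 by omega) (M.d (n - 1 - 1) μ)) = m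
        rw [map_add, tr_tr, tr_tr, tr_eq_self, map_zsmul (u.f (n - 1)), hw0, smul_add,
          eps_smul_eps_smul, hm']
        abel
    · -- surjectivity
      intro y
      refine QuotientAddGroup.induction_on y ?_
      rintro ⟨⟨x, ν⟩, hc⟩
      replace hc := mem_Zc.mp hc
      erw [cone_d, Prod.ext_iff] at hc
      obtain ⟨hx, hν⟩ := hc
      erw [Prod.snd_zero] at hν
      have hx' : F.d n x = 0 := by erw [Prod.fst_zero] at hx; exact hx
      have hν' := congrArg (N.tr (show n + 1 - 1 = n by omega)) hν
      rw [map_add, tr_tr, tr_tr, tr_eq_self, map_zero] at hν'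
      obtain ⟨m, hm⟩ := hsurj (n - 1) ν
      have hker : (Int.negOnePow (n + 1) : ℤ) • g.f n x +
          M.tr (show n - 1 + 1 = n by omega) (M.d (n - 1) m) ∈ (p.f n).ker := by
        rw [AddMonoidHom.mem_ker, map_add, map_zsmul, Hom.f_tr, p.comm, hm]
        exact hν'
      rw [hexact n] at hker
      obtain ⟨w, hw⟩ := hker
      set l : L.X n := -((Int.negOnePow (n + 1) : ℤ) • w) with hl
      have hul : u.f n l = -g.f n x -
          (Int.negOnePow (n + 1) : ℤ) •
            M.tr (show n - 1 + 1 = n by omega) (M.d (n - 1) m) := by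
        rw [hl, map_neg, map_zsmul, hw, smul_add, eps_smul_eps_smul, neg_add]
        abel
      have hdl : L.d n l = 0 := by
        apply hinj (n + 1)
        rw [map_zero, u.comm, hul, map_sub, map_neg, ← g.comm, hx', map_zero, neg_zero,
          map_zsmul, d_tr, M.dsq, map_zero, smul_zero, sub_zero]
      have hz : @id ((cone (sumHom u g)).X n) ((l, x), m) ∈ (cone (sumHom u g)).Zc n := by
        rw [mem_Zc, cone_d]
        refine Prod.ext ?_ ?_
        · exact Prod.ext hdl hx'
        · show M.tr (show n = n + 1 - 1 by omega)
              ((Int.negOnePow (n + 1) : ℤ) • (u.f n l + g.f n x)) +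
            M.tr (show n - 1 + 1 = n + 1 - 1 by omega) (M.d (n - 1) m) = 0
          rw [hul]
          rw [show -g.f n x -
              (Int.negOnePow (n + 1) : ℤ) •
                M.tr (show n - 1 + 1 = n by omega) (M.d (n - 1) m) + g.f n x =
              -((Int.negOnePow (n + 1) : ℤ) •
                M.tr (show n - 1 + 1 = n by omega) (M.d (n - 1) m)) by abel]
          rw [smul_neg, eps_smul_eps_smul, map_neg, tr_tr]
          exact neg_add_cancel _
      refine ⟨QuotientAddGroup.mk ⟨((l, x), m), hz⟩, ?_⟩
      show QuotientAddGroup.mk (zMap (A := cone (sumHom u g)) _ n ⟨((l, x), m), hz⟩) = _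
      congr 1
      exact Subtype.ext (Prod.ext rfl hm)

open Cplx in
/-- `H^n(Cone(φ_k)) ≅ H^n(Cone(ψ_k))` via `(l, x, m) ↦ (x, p m)`. -/
theorem stmt5 (L M N Ω : Cplx) (u : Cplx.Hom L M) (p : Cplx.Hom M N)
    (hinj : ∀ n, Function.Injective (u.f n))
    (hexact : ∀ n, (p.f n).ker = (u.f n).range)
    (hsurj : ∀ n, Function.Surjective (p.f n))
    (g : Cplx.Hom Ω M) (k : ℤ) :
    ∃ θ : Cplx.Hom (cone (sumHom u (g.comp (truncGEincl Ω k))))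
        (cone ((p.comp g).comp (truncGEincl Ω k))),
      (∀ (n : ℤ) (x : (cone (sumHom u (g.comp (truncGEincl Ω k)))).X n),
          θ.f n x = (x.1.2, p.f (n - 1) x.2)) ∧
      (∀ n, Function.Bijective (Hmap θ n)) :=
  key L M N (truncGE Ω k) u p hinj hexact hsurj (g.comp (truncGEincl Ω k))
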